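/- arXiv:2603.20919 — 2 statements merged into one kernel-verified Lean document; each statement's English description precedes it below -/
import Mathlib

section
/- Let g : ℝ^d → ℝ be a Neural Decision Tree function and let E(x) = ∇g(x) be its explanation map. Then E is globally Lipschitz on ℝ^d: there exists a constant L ≥ 0 such that ‖E(x) − E(x')‖ ≤ L ‖x − x'‖ for all x, x' ∈ ℝ^d, so that small perturbations of the input produce proportionally small variations of the explanation. -/
section NDTAux

variable {d : ℕ} {M : Type*}

/-- derivative of tanh -/
lemma ndt_hasDerivAt_tanh (t : ℝ) : HasDerivAt Real.tanh (1 / Real.cosh t ^ 2) t := by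
  have h : Real.tanh = fun t => Real.sinh t / Real.cosh t := funext Real.tanh_eq_sinh_div_cosh
  rw [h]
  have := (Real.hasDerivAt_sinh t).div (Real.hasDerivAt_cosh t) (ne_of_gt (Real.cosh_pos t))
  refine this.congr_deriv ?_
  rw [← Real.cosh_sq_sub_sinh_sq t]; ring

lemma ndt_abs_sinh_le_cosh (t : ℝ) : |Real.sinh t| ≤ Real.cosh t := by
  rw [abs_le]
  refine ⟨?_, (Real.sinh_lt_cosh t).le⟩
  have := Real.sinh_lt_cosh (-t)
  rw [Real.sinh_neg, Real.cosh_neg] at this; linarith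

lemma ndt_abs_tanh_le_one (t : ℝ) : |Real.tanh t| ≤ 1 := by
  rw [Real.tanh_eq_sinh_div_cosh, abs_div, abs_of_pos (Real.cosh_pos t),
    div_le_one (Real.cosh_pos t)]
  exact ndt_abs_sinh_le_cosh t

lemma ndt_tanhD_le_one (t : ℝ) : |1 / Real.cosh t ^ 2| ≤ 1 := by
  have h1 : (1 : ℝ) ≤ Real.cosh t := Real.one_le_cosh t
  have h2 : (1 : ℝ) ≤ Real.cosh t ^ 2 := by nlinarith
  rw [abs_of_nonneg (by positivity)]
  rw [div_le_one (by positivity)]; exact h2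

/-- the derivative of tanh is 2-Lipschitz -/
lemma ndt_tanhD_lipschitz (s t : ℝ) :
    |1 / Real.cosh s ^ 2 - 1 / Real.cosh t ^ 2| ≤ 2 * |s - t| := by
  have key : ∀ u : ℝ, HasDerivAt (fun r => 1 / Real.cosh r ^ 2)
      (-(2 * Real.cosh u * Real.sinh u) / (Real.cosh u ^ 2) ^ 2) u := by
    intro u
    have h1 : HasDerivAt (fun r => Real.cosh r ^ 2) (2 * Real.cosh u * Real.sinh u) u := by
      have := (Real.hasDerivAt_cosh u).fun_pow 2
      exact this.congr_deriv (by push_cast; ring)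
    have := h1.fun_inv (by positivity)
    simpa [one_div] using this
  have bound : ∀ u : ℝ, ‖-(2 * Real.cosh u * Real.sinh u) / (Real.cosh u ^ 2) ^ 2‖ ≤ 2 := by
    intro u
    have hc : (0:ℝ) < Real.cosh u := Real.cosh_pos u
    have h1 : (1:ℝ) ≤ Real.cosh u := Real.one_le_cosh u
    have hs := ndt_abs_sinh_le_cosh u
    rw [Real.norm_eq_abs, abs_div, abs_neg, abs_of_nonneg (by positivity : (0:ℝ) ≤ (Real.cosh u ^2)^2)]
    rw [div_le_iff₀ (by positivity)]
    have : |2 * Real.cosh u * Real.sinh u| ≤ 2 * Real.cosh u ^ 2 := by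
      rw [abs_mul, abs_of_nonneg (by positivity : (0:ℝ) ≤ 2 * Real.cosh u)]
      nlinarith [abs_nonneg (Real.sinh u)]
    have h2 : (1:ℝ) ≤ Real.cosh u ^ 2 := by nlinarith
    nlinarith [abs_nonneg (2 * Real.cosh u * Real.sinh u)]
  have := Convex.norm_image_sub_le_of_norm_hasDerivWithin_le
    (f := fun r => 1 / Real.cosh r ^ 2)
    (f' := fun u => -(2 * Real.cosh u * Real.sinh u) / (Real.cosh u ^ 2) ^ 2)
    (s := Set.univ) (C := 2)
    (fun u _ => (key u).hasDerivWithinAt) (fun u _ => bound u) convex_univ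
    (Set.mem_univ t) (Set.mem_univ s)
  simpa [Real.norm_eq_abs] using this

/-- A "good" function: differentiable, bounded, with bounded and Lipschitz derivative. -/
def NDTGood (f : EuclideanSpace ℝ (Fin d) → ℝ) : Prop :=
  ∃ B C L : ℝ, 0 ≤ B ∧ 0 ≤ C ∧ 0 ≤ L ∧
    Differentiable ℝ f ∧ (∀ x, |f x| ≤ B) ∧ (∀ x, ‖fderiv ℝ f x‖ ≤ C) ∧
    ∀ x y, ‖fderiv ℝ f x - fderiv ℝ f y‖ ≤ L * ‖x - y‖

lemma ndtGood_const (c : ℝ) : NDTGood (d := d) (fun _ => c) := by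
  refine ⟨|c|, 0, 0, abs_nonneg c, le_refl 0, le_refl 0, differentiable_const c,
    fun x => le_refl _, ?_, ?_⟩ <;> simp [fderiv_const]

lemma NDTGood.lip {f : EuclideanSpace ℝ (Fin d) → ℝ} {C : ℝ}
    (hf : Differentiable ℝ f) (hC : ∀ x, ‖fderiv ℝ f x‖ ≤ C)
    (x y : EuclideanSpace ℝ (Fin d)) : |f x - f y| ≤ C * ‖x - y‖ := by
  have := Convex.norm_image_sub_le_of_norm_fderiv_le (f := f) (s := Set.univ)
    (fun u _ => hf u) (fun u _ => hC u) convex_univ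
    (Set.mem_univ y) (Set.mem_univ x)
  simpa [Real.norm_eq_abs] using this

lemma NDTGood.mul {f g : EuclideanSpace ℝ (Fin d) → ℝ}
    (hf : NDTGood f) (hg : NDTGood g) : NDTGood (fun x => f x * g x) := by
  obtain ⟨B, C, L, hB, hC, hL, hd, hb, hdb, hdl⟩ := hf
  obtain ⟨B', C', L', hB', hC', hL', hd', hb', hdb', hdl'⟩ := hg
  refine ⟨B * B', B * C' + B' * C, B * L' + B' * L + 2 * C * C', by positivity,
    by positivity, by positivity, hd.mul hd', ?_, ?_, ?_⟩
  · intro x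
    rw [abs_mul]
    exact mul_le_mul (hb x) (hb' x) (abs_nonneg _) hB
  · intro x
    rw [fderiv_fun_mul (hd x) (hd' x)]
    refine (norm_add_le _ _).trans ?_
    rw [norm_smul, norm_smul]
    simp only [Real.norm_eq_abs]
    exact add_le_add (mul_le_mul (hb x) (hdb' x) (norm_nonneg _) hB)
      (mul_le_mul (hb' x) (hdb x) (norm_nonneg _) hB')
  · intro x y
    rw [fderiv_fun_mul (hd x) (hd' x),
      fderiv_fun_mul (hd y) (hd' y)]
    have key : ∀ (u v : ℝ) (F G : EuclideanSpace ℝ (Fin d) →L[ℝ] ℝ),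
        u • F - v • G = u • (F - G) + (u - v) • G := by
      intro u v F G; rw [smul_sub, sub_smul u v G]; abel
    have e1 : f x • fderiv ℝ g x + g x • fderiv ℝ f x -
        (f y • fderiv ℝ g y + g y • fderiv ℝ f y)
        = (f x • (fderiv ℝ g x - fderiv ℝ g y) + (f x - f y) • fderiv ℝ g y)
          + (g x • (fderiv ℝ f x - fderiv ℝ f y) + (g x - g y) • fderiv ℝ f y) := by
      rw [smul_sub, smul_sub, sub_smul, sub_smul]; abel
    rw [e1]
    have flip : |f x - f y| ≤ C * ‖x - y‖ := NDTGood.lip hd hdb x y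
    have glip : |g x - g y| ≤ C' * ‖x - y‖ := NDTGood.lip hd' hdb' x y
    calc _ ≤ ‖f x • (fderiv ℝ g x - fderiv ℝ g y)‖ + ‖(f x - f y) • fderiv ℝ g y‖
            + (‖g x • (fderiv ℝ f x - fderiv ℝ f y)‖ + ‖(g x - g y) • fderiv ℝ f y‖) :=
          (norm_add_le _ _).trans (by gcongr <;> exact norm_add_le _ _)
      _ ≤ B * (L' * ‖x - y‖) + (C * ‖x - y‖) * C' + (B' * (L * ‖x - y‖) + (C' * ‖x - y‖) * C) := by
          simp only [norm_smul, Real.norm_eq_abs]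
          exact add_le_add (add_le_add
            (mul_le_mul (hb x) (hdl' x y) (norm_nonneg _) hB)
            (mul_le_mul flip (hdb' y) (norm_nonneg _) (by positivity)))
            (add_le_add (mul_le_mul (hb' x) (hdl x y) (norm_nonneg _) hB')
              (mul_le_mul glip (hdb y) (norm_nonneg _) (by positivity)))
      _ = (B * L' + B' * L + 2 * C * C') * ‖x - y‖ := by ring

lemma ndt_coord_le_norm (x : EuclideanSpace ℝ (Fin d)) (i : Fin d) : |x i| ≤ ‖x‖ := by
  rw [EuclideanSpace.norm_eq]
  refine le_trans ?_ (Real.sqrt_le_sqrt (Finset.single_le_sum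
    (f := fun i => ‖x i‖ ^ 2) (fun _ _ => sq_nonneg _) (Finset.mem_univ i)))
  rw [Real.sqrt_sq_eq_abs]; simp [abs_abs]

/-- the base split function is good -/
lemma ndtGood_base (j : M → Fin d) (α : M → ℝ) {γ : ℝ} (hγ : 0 < γ) (m : M) :
    NDTGood (fun x : EuclideanSpace ℝ (Fin d) => Real.tanh (γ * (x (j m) - α m))) := by
  set ℓ : EuclideanSpace ℝ (Fin d) →L[ℝ] ℝ := γ • EuclideanSpace.proj (j m) with hℓ
  have hℓnorm : ‖ℓ‖ ≤ γ := by
    refine ContinuousLinearMap.opNorm_le_bound _ hγ.le (fun x => ?_)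
    have : ℓ x = γ * x (j m) := rfl
    rw [this, Real.norm_eq_abs, abs_mul, abs_of_pos hγ]
    have := ndt_coord_le_norm x (j m)
    nlinarith
  have hF : ∀ x : EuclideanSpace ℝ (Fin d),
      HasFDerivAt (fun x : EuclideanSpace ℝ (Fin d) => Real.tanh (γ * (x (j m) - α m)))
        ((1 / Real.cosh (γ * (x (j m) - α m)) ^ 2) • ℓ) x := by
    intro x
    have hin : HasFDerivAt (fun x : EuclideanSpace ℝ (Fin d) => γ * (x (j m) - α m)) ℓ x := by
      have h1 : HasFDerivAt (fun x : EuclideanSpace ℝ (Fin d) => x (j m))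
          (EuclideanSpace.proj (j m) : EuclideanSpace ℝ (Fin d) →L[ℝ] ℝ) x :=
        (EuclideanSpace.proj (j m) : EuclideanSpace ℝ (Fin d) →L[ℝ] ℝ).hasFDerivAt
      have h2 := (h1.sub_const (α m)).const_mul γ
      exact h2
    exact (ndt_hasDerivAt_tanh (γ * (x (j m) - α m))).comp_hasFDerivAt x hin
  have hdiff : Differentiable ℝ (fun x : EuclideanSpace ℝ (Fin d) =>
      Real.tanh (γ * (x (j m) - α m))) := fun x => (hF x).differentiableAt
  refine ⟨1, γ, 2 * γ ^ 2, zero_le_one, hγ.le, by positivity, hdiff, ?_, ?_, ?_⟩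
  · intro x; exact ndt_abs_tanh_le_one _
  · intro x
    rw [(hF x).fderiv]
    rw [norm_smul, Real.norm_eq_abs]
    calc |1 / Real.cosh (γ * (x (j m) - α m)) ^ 2| * ‖ℓ‖ ≤ 1 * γ :=
          mul_le_mul (ndt_tanhD_le_one _) hℓnorm (norm_nonneg _) zero_le_one
      _ = γ := one_mul γ
  · intro x y
    rw [(hF x).fderiv, (hF y).fderiv, ← sub_smul, norm_smul, Real.norm_eq_abs]
    have h1 := ndt_tanhD_lipschitz (γ * (x (j m) - α m)) (γ * (y (j m) - α m))
    have h2 : |γ * (x (j m) - α m) - (γ * (y (j m) - α m))| ≤ γ * ‖x - y‖ := by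
      have hxy : (x - y) (j m) = x (j m) - y (j m) := rfl
      have : γ * (x (j m) - α m) - γ * (y (j m) - α m) = γ * ((x - y) (j m)) := by
        rw [hxy]; ring
      rw [this, abs_mul, abs_of_pos hγ]
      exact mul_le_mul_of_nonneg_left (ndt_coord_le_norm (x - y) (j m)) hγ.le
    calc |1 / Real.cosh (γ * (x (j m) - α m)) ^ 2 - 1 / Real.cosh (γ * (y (j m) - α m)) ^ 2| * ‖ℓ‖
        ≤ (2 * (γ * ‖x - y‖)) * γ := by
          refine mul_le_mul (h1.trans (by linarith)) hℓnorm (norm_nonneg _) (by positivity)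
      _ = 2 * γ ^ 2 * ‖x - y‖ := by ring

lemma ndtGood_prod (j : M → Fin d) (α : M → ℝ) {γ : ℝ} (hγ : 0 < γ) (s : Finset M) :
    NDTGood (fun x : EuclideanSpace ℝ (Fin d) =>
      ∏ m ∈ s, Real.tanh (γ * (x (j m) - α m))) := by
  induction s using Finset.cons_induction with
  | empty => simpa using ndtGood_const (d := d) 1
  | cons a s ha ih =>
    have : (fun x : EuclideanSpace ℝ (Fin d) =>
        ∏ m ∈ Finset.cons a s ha, Real.tanh (γ * (x (j m) - α m)))
        = fun x => Real.tanh (γ * (x (j a) - α a)) *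
            ∏ m ∈ s, Real.tanh (γ * (x (j m) - α m)) := by
      funext x; rw [Finset.prod_cons]
    rw [this]
    exact (ndtGood_base j α hγ a).mul ih

lemma NDTGood.add {f g : EuclideanSpace ℝ (Fin d) → ℝ}
    (hf : NDTGood f) (hg : NDTGood g) : NDTGood (fun x => f x + g x) := by
  obtain ⟨B, C, L, hB, hC, hL, hd, hb, hdb, hdl⟩ := hf
  obtain ⟨B', C', L', hB', hC', hL', hd', hb', hdb', hdl'⟩ := hg
  refine ⟨B + B', C + C', L + L', by positivity, by positivity, by positivity,
    hd.add hd', ?_, ?_, ?_⟩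
  · intro x; exact (abs_add_le _ _).trans (add_le_add (hb x) (hb' x))
  · intro x
    rw [fderiv_fun_add (hd x) (hd' x)]
    exact (norm_add_le _ _).trans (add_le_add (hdb x) (hdb' x))
  · intro x y
    rw [fderiv_fun_add (hd x) (hd' x),
      fderiv_fun_add (hd y) (hd' y)]
    have e : fderiv ℝ f x + fderiv ℝ g x - (fderiv ℝ f y + fderiv ℝ g y)
        = (fderiv ℝ f x - fderiv ℝ f y) + (fderiv ℝ g x - fderiv ℝ g y) := by abel
    rw [e]
    calc _ ≤ ‖fderiv ℝ f x - fderiv ℝ f y‖ + ‖fderiv ℝ g x - fderiv ℝ g y‖ := norm_add_le _ _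
      _ ≤ L * ‖x - y‖ + L' * ‖x - y‖ := add_le_add (hdl x y) (hdl' x y)
      _ = (L + L') * ‖x - y‖ := by ring

lemma NDTGood.sum {ι : Type*} (s : Finset ι) (f : ι → EuclideanSpace ℝ (Fin d) → ℝ)
    (hf : ∀ i ∈ s, NDTGood (f i)) : NDTGood (fun x => ∑ i ∈ s, f i x) := by
  induction s using Finset.cons_induction with
  | empty => simpa using ndtGood_const (d := d) 0
  | cons a s ha ih =>
    have : (fun x : EuclideanSpace ℝ (Fin d) => ∑ i ∈ Finset.cons a s ha, f i x)
        = fun x => f a x + ∑ i ∈ s, f i x := by funext x; rw [Finset.sum_cons]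
    rw [this]
    exact (hf a (Finset.mem_cons_self a s)).add
      (ih (fun i hi => hf i (Finset.mem_cons_of_mem hi)))

end NDTAux

/-- A Neural Decision Tree function `g : ℝ^d → ℝ`,
`g x = ∑_{k=1}^{K} a_k ∏_{m ∈ P_k} tanh (γ (x_{j_m} - α_m))`, where `K ≥ 1` is
the number of root-to-leaf paths, `a_k` are the leaf values, `P_k` is the
finite set of splits along path `k`, each split `m` has feature index `j m`
and threshold `α m`, and `γ > 0` is the sharpness parameter. -/
noncomputable def NDT {d K : ℕ} {M : Type*} (a : Fin K → ℝ) (P : Fin K → Finset M)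
    (j : M → Fin d) (α : M → ℝ) (γ : ℝ) (x : EuclideanSpace ℝ (Fin d)) : ℝ :=
  ∑ k : Fin K, a k * ∏ m ∈ P k, Real.tanh (γ * (x (j m) - α m))

/-- The explanation map `E x = ∇g x` of a Neural Decision Tree function `g`
is globally Lipschitz on ℝ^d: there is `L ≥ 0` with
`‖E x - E x'‖ ≤ L * ‖x - x'‖` for all `x, x'`. -/
theorem ndt_gradient_lipschitz {d K : ℕ} {M : Type*} (hK : 1 ≤ K)
    (a : Fin K → ℝ) (P : Fin K → Finset M) (j : M → Fin d) (α : M → ℝ)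
    (γ : ℝ) (hγ : 0 < γ) :
    ∃ L : ℝ, 0 ≤ L ∧ ∀ x x' : EuclideanSpace ℝ (Fin d),
      ‖gradient (NDT a P j α γ) x - gradient (NDT a P j α γ) x'‖ ≤
        L * ‖x - x'‖ := by
  have hgood : NDTGood (NDT a P j α γ) := by
    have : NDT a P j α γ = fun x => ∑ k : Fin K,
        (fun k => fun x : EuclideanSpace ℝ (Fin d) =>
          a k * ∏ m ∈ P k, Real.tanh (γ * (x (j m) - α m))) k x := rfl
    rw [this]
    exact NDTGood.sum Finset.univ _ (fun k _ =>
      (ndtGood_const (a k)).mul (ndtGood_prod j α hγ (P k)))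
  obtain ⟨B, C, L, hB, hC, hL, hd, hb, hdb, hdl⟩ := hgood
  refine ⟨L, hL, fun x x' => ?_⟩
  have heq : gradient (NDT a P j α γ) x - gradient (NDT a P j α γ) x'
      = (InnerProductSpace.toDual ℝ (EuclideanSpace ℝ (Fin d))).symm
          (fderiv ℝ (NDT a P j α γ) x - fderiv ℝ (NDT a P j α γ) x') := by
    rw [map_sub]; rfl
  rw [heq, LinearIsometryEquiv.norm_map]
  exact hdl x x'
end

section
/- Let d ≥ 1, let x₀ ∈ ℝ^d, and let f : ℝ^d → ℝ be twice continuously differentiable on a neighborhood of x₀ with nonzero Hessian H_f(x₀) ≠ 0. Then there exist constants c > 0 and r₀ > 0 such that for every r with 0 < r ≤ r₀ and every affine function g : ℝ^d → ℝ (i.e., g(x) = wᵀx + b for some w ∈ ℝ^d, b ∈ ℝ), one has sup_{x : ‖x − x₀‖ ≤ r} |f(x) − g(x)| ≥ c r² ‖H_f(x₀)‖. In particular, the best local approximation error of f by affine (linear) surrogate models on the ball B(x₀, r) is bounded below by a positive multiple of r² ‖H_f(x₀)‖. -/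
set_option maxHeartbeats 1000000
open scoped RealInnerProductSpace

lemma exists_unit_diag {E : Type*} [NormedAddCommGroup E] [InnerProductSpace ℝ E]
    (H : E →L[ℝ] E →L[ℝ] ℝ) (hsymm : ∀ v w : E, H v w = H w v) (hH : H ≠ 0) :
    ∃ v : E, ‖v‖ = 1 ∧ ‖H‖ / 2 < |H v v| := by
  have hHpos : 0 < ‖H‖ := by
    rcases (norm_nonneg H).lt_or_eq with h | h
    · exact h
    · exact absurd (H.opNorm_zero_iff.mp h.symm) hH
  obtain ⟨u, hu⟩ : ∃ u, (3 / 4 * ‖H‖) * ‖u‖ < ‖H u‖ := by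
    by_contra h
    push_neg at h
    have := ContinuousLinearMap.opNorm_le_bound H (by positivity) h
    nlinarith
  have hule : ‖H u‖ ≤ ‖H‖ * ‖u‖ := H.le_opNorm u
  have hu0 : 0 < ‖u‖ := by nlinarith [norm_nonneg u, norm_nonneg (H u)]
  have hHu0 : 0 < ‖H u‖ := lt_of_le_of_lt (by positivity) hu
  obtain ⟨w, hw⟩ : ∃ w, (2 / 3 * ‖H u‖) * ‖w‖ < ‖H u w‖ := by
    by_contra h
    push_neg at h
    have := ContinuousLinearMap.opNorm_le_bound (H u) (by positivity) h
    nlinarith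
  have hwle : ‖H u w‖ ≤ ‖H u‖ * ‖w‖ := (H u).le_opNorm w
  have hw0 : 0 < ‖w‖ := by nlinarith [norm_nonneg w, norm_nonneg (H u w)]
  have hu' : u ≠ 0 := by intro h; rw [h, norm_zero] at hu0; exact lt_irrefl _ hu0
  have hw' : w ≠ 0 := by intro h; rw [h, norm_zero] at hw0; exact lt_irrefl _ hw0
  set u1 := ‖u‖⁻¹ • u with hu1
  set w1 := ‖w‖⁻¹ • w with hw1
  have hu1n : ‖u1‖ = 1 := norm_smul_inv_norm hu'
  have hw1n : ‖w1‖ = 1 := norm_smul_inv_norm hw'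
  have happ : H u1 w1 = ‖u‖⁻¹ * (‖w‖⁻¹ * H u w) := by
    simp [hu1, hw1, map_smul]; ring
  have hbig : ‖H‖ / 2 < |H u1 w1| := by
    have h1 : |H u w| = ‖H u w‖ := (Real.norm_eq_abs _).symm
    have h2 : 2 / 3 * ‖H u‖ * ‖w‖ < |H u w| := by rw [h1]; exact hw
    rw [happ, abs_mul, abs_mul, abs_inv, abs_inv, abs_norm, abs_norm]
    rw [show ‖u‖⁻¹ * (‖w‖⁻¹ * |(H u) w|) = |(H u) w| / (‖u‖ * ‖w‖) by
      field_simp, lt_div_iff₀ (by positivity)]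
    nlinarith
  set a := u1 + w1 with ha
  set b := u1 - w1 with hb
  have hQa : H a a = H u1 u1 + H u1 w1 + H w1 u1 + H w1 w1 := by
    simp [ha, map_add, ContinuousLinearMap.add_apply]; ring
  have hQb : H b b = H u1 u1 - H u1 w1 - H w1 u1 + H w1 w1 := by
    simp [hb, map_sub, ContinuousLinearMap.sub_apply]; ring
  have hpol : H a a - H b b = 4 * H u1 w1 := by
    rw [hQa, hQb, hsymm w1 u1]; ring
  have hnorm : ‖a‖ ^ 2 + ‖b‖ ^ 2 = 4 := by
    have h1 := norm_add_sq_real u1 w1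
    have h2 := norm_sub_sq_real u1 w1
    rw [ha, hb]
    rw [hu1n, hw1n] at h1 h2
    linarith [h1, h2]
  have h4 : 4 * |H u1 w1| ≤ |H a a| + |H b b| := by
    calc 4 * |H u1 w1| = |H a a - H b b| := by rw [hpol, abs_mul]; norm_num
    _ ≤ |H a a| + |H b b| := by
        rw [sub_eq_add_neg]; exact (abs_add_le _ _).trans (by rw [abs_neg])
  have hclaim : ‖H‖ / 2 * ‖a‖ ^ 2 < |H a a| ∨ ‖H‖ / 2 * ‖b‖ ^ 2 < |H b b| := by
    by_contra h
    push_neg at h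
    nlinarith [h.1, h.2]
  have key : ∀ x : E, ‖H‖ / 2 * ‖x‖ ^ 2 < |H x x| → ∃ v : E, ‖v‖ = 1 ∧ ‖H‖ / 2 < |H v v| := by
    intro x hx
    have hx0 : 0 < ‖x‖ := by
      rcases (norm_nonneg x).lt_or_eq with h | h
      · exact h
      · exfalso
        have : x = 0 := norm_eq_zero.mp h.symm
        rw [this] at hx
        simp at hx
    have hxne : x ≠ 0 := fun h => by rw [h, norm_zero] at hx0; exact lt_irrefl _ hx0
    refine ⟨‖x‖⁻¹ • x, norm_smul_inv_norm hxne, ?_⟩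
    have : H (‖x‖⁻¹ • x) (‖x‖⁻¹ • x) = ‖x‖⁻¹ * (‖x‖⁻¹ * H x x) := by
      simp [map_smul]
    simp only [this, abs_mul, abs_inv, abs_norm]
    have key2 : ‖x‖ ^ 2 * (‖x‖⁻¹ * ‖x‖⁻¹) = 1 := by
      rw [sq]; field_simp
    calc ‖H‖ / 2 = ‖H‖ / 2 * (‖x‖ ^ 2 * (‖x‖⁻¹ * ‖x‖⁻¹)) := by rw [key2, mul_one]
      _ = ‖H‖ / 2 * ‖x‖ ^ 2 * (‖x‖⁻¹ * ‖x‖⁻¹) := by ring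
      _ < |H x x| * (‖x‖⁻¹ * ‖x‖⁻¹) := by
          exact mul_lt_mul_of_pos_right hx (by positivity)
      _ = ‖x‖⁻¹ * (‖x‖⁻¹ * |H x x|) := by ring
  rcases hclaim with h | h
  · exact key a h
  · exact key b h


lemma sndiff_ge {φ φ' φ'' : ℝ → ℝ} {δ m : ℝ} (hδ : 0 < δ) (hm : 0 ≤ m)
    (hφ : ∀ t ∈ Set.Ioo (-(2*δ)) (2*δ), HasDerivAt φ (φ' t) t)
    (hφ' : ∀ t ∈ Set.Ioo (-(2*δ)) (2*δ), HasDerivAt φ' (φ'' t) t)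
    (hφ'' : ∀ t ∈ Set.Ioo (-(2*δ)) (2*δ), m ≤ φ'' t) :
    ∀ r : ℝ, 0 < r → r ≤ δ → m * r ^ 2 ≤ φ r + φ (-r) - 2 * φ 0 := by
  intro r hr hrδ
  set J := Set.Ioo (-(2*δ)) (2*δ) with hJ
  have hJo : IsOpen J := isOpen_Ioo
  have hsub : Set.Icc (-δ) δ ⊆ J := fun t ht =>
    ⟨by have := ht.1; linarith, by have := ht.2; linarith⟩
  set h : ℝ → ℝ := fun t => φ t - m / 2 * t ^ 2 with hh
  have hd1 : ∀ t ∈ J, HasDerivAt h (φ' t - m * t) t := by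
    intro t ht
    have : HasDerivAt (fun t : ℝ => m / 2 * t ^ 2) (m / 2 * (2 * t)) t := by
      exact (hasDerivAt_pow 2 t).const_mul (m / 2) |>.congr_deriv (by ring)
    have := (hφ t ht).sub this
    exact this.congr_deriv (by ring)
  have hderiv_eq : ∀ t ∈ J, deriv h t = φ' t - m * t := fun t ht => (hd1 t ht).deriv
  have hd2 : ∀ t ∈ J, HasDerivAt (deriv h) (φ'' t - m) t := by
    intro t ht
    have h1 : HasDerivAt (fun t => φ' t - m * t) (φ'' t - m) t := by
      have := (hφ' t ht).sub ((hasDerivAt_id t).const_mul m)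
      exact this.congr_deriv (by ring)
    apply h1.congr_of_eventuallyEq
    filter_upwards [hJo.mem_nhds ht] with s hs
    exact hderiv_eq s hs
  have hconv : ConvexOn ℝ (Set.Icc (-δ) δ) h := by
    apply convexOn_of_deriv2_nonneg (convex_Icc _ _)
    · exact fun t ht => ((hd1 t (hsub ht)).differentiableAt).continuousAt.continuousWithinAt
    · rw [interior_Icc]
      exact fun t ht => ((hd1 t (hsub (Set.Ioo_subset_Icc_self ht))).differentiableAt).differentiableWithinAt
    · rw [interior_Icc]
      exact fun t ht => ((hd2 t (hsub (Set.Ioo_subset_Icc_self ht))).differentiableAt).differentiableWithinAt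
    · rw [interior_Icc]
      intro t ht
      have ht' : t ∈ J := hsub (Set.Ioo_subset_Icc_self ht)
      have : deriv^[2] h t = deriv (deriv h) t := by
        simp [Function.iterate_succ, Function.iterate_one]
      rw [this, (hd2 t ht').deriv]
      have := hφ'' t ht'
      linarith
  have hmem1 : r ∈ Set.Icc (-δ) δ := ⟨by linarith, hrδ⟩
  have hmem2 : -r ∈ Set.Icc (-δ) δ := ⟨by linarith, by linarith⟩
  have hmid := hconv.2 hmem1 hmem2 (by norm_num : (0:ℝ) ≤ 1/2) (by norm_num : (0:ℝ) ≤ 1/2) (by norm_num)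
  have hzero : (1/2 : ℝ) • r + (1/2 : ℝ) • (-r) = 0 := by
    simp [smul_eq_mul]
  rw [hzero] at hmid
  simp only [smul_eq_mul, hh] at hmid
  nlinarith [hmid]

/-- Lower bound on the local fidelity error of affine (linear) surrogates:
if `f : ℝ^d → ℝ` is twice continuously differentiable on a neighborhood of
`x₀` with nonzero Hessian `H_f(x₀) = fderiv ℝ (fderiv ℝ f) x₀ ≠ 0`, then there
are `c > 0` and `r₀ > 0` such that for every radius `0 < r ≤ r₀` and every
affine function `g x = ⟪w, x⟫ + b`, the sup of `|f x - g x|` over the closed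
ball `B(x₀, r)` is at least `c * r² * ‖H_f(x₀)‖`. -/

theorem affine_surrogate_fidelity_lower_bound (d : ℕ) (hd : 1 ≤ d)
    (x₀ : EuclideanSpace ℝ (Fin d)) (f : EuclideanSpace ℝ (Fin d) → ℝ)
    (U : Set (EuclideanSpace ℝ (Fin d))) (hU : U ∈ nhds x₀)
    (hf : ContDiffOn ℝ 2 f U)
    (hH : fderiv ℝ (fderiv ℝ f) x₀ ≠ 0) :
    ∃ c > (0 : ℝ), ∃ r₀ > (0 : ℝ), ∀ r : ℝ, 0 < r → r ≤ r₀ →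
      ∀ (w : EuclideanSpace ℝ (Fin d)) (b : ℝ),
        c * r ^ 2 * ‖fderiv ℝ (fderiv ℝ f) x₀‖ ≤
          ⨆ x ∈ Metric.closedBall x₀ r, |f x - (⟪w, x⟫ + b)| := by
  classical
  have hcAt : ContDiffAt ℝ 2 f x₀ := hf.contDiffAt hU
  have hsymm : ∀ v w, fderiv ℝ (fderiv ℝ f) x₀ v w = fderiv ℝ (fderiv ℝ f) x₀ w v :=
    hcAt.isSymmSndFDerivAt (by rw [minSmoothness_of_isRCLikeNormedField])
  set H := fderiv ℝ (fderiv ℝ f) x₀ with hHdef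
  have hHpos : 0 < ‖H‖ := by
    rcases (norm_nonneg H).lt_or_eq with h | h
    · exact h
    · exact absurd (H.opNorm_zero_iff.mp h.symm) hH
  obtain ⟨v, hv1, hvH⟩ := exists_unit_diag H hsymm hH
  obtain ⟨V, hVU, hVo, hx₀V⟩ := mem_nhds_iff.mp hU
  have hfV : ContDiffOn ℝ 2 f V := hf.mono hVU
  have hdiff : ∀ x ∈ V, DifferentiableAt ℝ f x := fun x hx =>
    ((hfV x hx).contDiffAt (hVo.mem_nhds hx)).differentiableAt two_ne_zero
  have hdiff' : ∀ x ∈ V, DifferentiableAt ℝ (fderiv ℝ f) x := fun x hx =>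
    (((hfV x hx).contDiffAt (hVo.mem_nhds hx)).fderiv_right (m := 1) (by norm_num)).differentiableAt one_ne_zero
  have hcont2 : ContinuousOn (fderiv ℝ (fderiv ℝ f)) V :=
    (hfV.fderiv_of_isOpen hVo (by norm_num)).continuousOn_fderiv_of_isOpen hVo le_rfl
  set L : ℝ → EuclideanSpace ℝ (Fin d) := fun t => x₀ + t • v with hLdef
  have hLd : ∀ t : ℝ, HasDerivAt L v t := fun t =>
    (((hasDerivAt_id t).smul_const v).const_add x₀).congr_deriv (one_smul ℝ v)
  have hLc : Continuous L := continuous_const.add (continuous_id.smul continuous_const)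
  have hL0 : L 0 = x₀ := by simp [hLdef]
  set ψ : ℝ → ℝ := fun t => fderiv ℝ f (L t) v with hψdef
  set Q : ℝ → ℝ := fun t => fderiv ℝ (fderiv ℝ f) (L t) v v with hQdef
  have hφd : ∀ t, L t ∈ V → HasDerivAt (fun s => f (L s)) (ψ t) t := fun t ht =>
    (hdiff _ ht).hasFDerivAt.comp_hasDerivAt t (hLd t)
  have hψd : ∀ t, L t ∈ V → HasDerivAt ψ (Q t) t := by
    intro t ht
    have h1 : HasDerivAt (fun s => fderiv ℝ f (L s)) (fderiv ℝ (fderiv ℝ f) (L t) v) t :=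
      (hdiff' _ ht).hasFDerivAt.comp_hasDerivAt t (hLd t)
    exact (ContinuousLinearMap.apply ℝ ℝ v).hasFDerivAt.comp_hasDerivAt t h1
  have hQ0 : Q 0 = H v v := by rw [hQdef]; simp [hL0, hHdef]
  -- continuity of Q at 0
  have hQc : ContinuousAt Q 0 := by
    have h1 : ContinuousAt (fderiv ℝ (fderiv ℝ f)) (L 0) := by
      rw [hL0]; exact hcont2.continuousAt (hVo.mem_nhds hx₀V)
    have h2 : ContinuousAt (fun t => fderiv ℝ (fderiv ℝ f) (L t)) 0 :=
      h1.comp hLc.continuousAt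
    exact (((ContinuousLinearMap.apply ℝ ℝ v).comp
      (ContinuousLinearMap.apply ℝ (EuclideanSpace ℝ (Fin d) →L[ℝ] ℝ) v)).continuous.continuousAt).comp h2
  -- choose ε for Q and the line preimage, and ρ for the ball
  have hSmem : {t : ℝ | L t ∈ V ∧ |Q t - Q 0| < ‖H‖ / 4} ∈ nhds (0 : ℝ) := by
    have h1 : L ⁻¹' V ∈ nhds (0 : ℝ) :=
      (hVo.preimage hLc).mem_nhds (by simp [Set.mem_preimage, hL0, hx₀V])
    have h2 : Q ⁻¹' Metric.ball (Q 0) (‖H‖ / 4) ∈ nhds (0 : ℝ) :=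
      hQc.preimage_mem_nhds (Metric.ball_mem_nhds (Q 0) (by positivity))
    filter_upwards [h1, h2] with t ht1 ht2
    refine ⟨ht1, ?_⟩
    have := Metric.mem_ball.mp ht2
    rwa [Real.dist_eq] at this
  obtain ⟨ε, hεpos, hεsub⟩ := Metric.mem_nhds_iff.mp hSmem
  obtain ⟨ρ, hρpos, hρsub⟩ := Metric.mem_nhds_iff.mp (hVo.mem_nhds hx₀V)
  set δ := min (ε / 3) (ρ / 3) with hδdef
  have hδpos : 0 < δ := lt_min (by positivity) (by positivity)
  have hJ : ∀ t ∈ Set.Ioo (-(2*δ)) (2*δ), L t ∈ V ∧ |Q t - Q 0| < ‖H‖ / 4 := by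
    intro t ht
    apply hεsub
    rw [Metric.mem_ball, Real.dist_eq, sub_zero, abs_lt]
    have h1 : δ ≤ ε / 3 := min_le_left _ _
    exact ⟨by have := ht.1; linarith, by have := ht.2; linarith⟩
  refine ⟨1/16, by norm_num, δ, hδpos, ?_⟩
  intro r hr hrδ w b
  set e : EuclideanSpace ℝ (Fin d) → ℝ := fun x => f x - (⟪w, x⟫ + b) with hedef
  set s := Metric.closedBall x₀ r with hsdef
  set S := ⨆ x ∈ s, |e x| with hSdef
  -- the three points are in s and in V
  have hdistL : ∀ t : ℝ, dist (L t) x₀ = |t| := by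
    intro t
    rw [hLdef, dist_eq_norm]
    simp [norm_smul, hv1]
  have hmem : ∀ t : ℝ, |t| ≤ r → L t ∈ s := by
    intro t ht
    rw [hsdef, Metric.mem_closedBall, hdistL]
    exact ht
  have hp1 : L r ∈ s := hmem r (by rw [abs_of_pos hr])
  have hp2 : L (-r) ∈ s := hmem (-r) (by rw [abs_neg, abs_of_pos hr])
  have hp0 : L 0 ∈ s := hmem 0 (by simp; positivity)
  -- s ⊆ V
  have hsV : s ⊆ V := by
    intro x hx
    apply hρsub
    rw [Metric.mem_ball]
    have := Metric.mem_closedBall.mp hx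
    have h1 : δ ≤ ρ / 3 := min_le_right _ _
    calc dist x x₀ ≤ r := this
      _ < ρ := by linarith
  -- sup bounds each value
  have hecont : ContinuousOn (fun x => |e x|) s := by
    apply ContinuousOn.abs
    rw [hedef]
    exact ((hfV.continuousOn).mono hsV).sub
      ((continuous_const.inner continuous_id).add continuous_const).continuousOn
  obtain ⟨M0, hM0⟩ := (isCompact_closedBall x₀ r).exists_bound_of_continuousOn hecont
  have hbdd : BddAbove (Set.range fun x => ⨆ _ : x ∈ s, |e x|) := by
    refine ⟨max M0 0, ?_⟩
    rintro y ⟨x, rfl⟩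
    by_cases hx : x ∈ s
    · haveI : Nonempty (x ∈ s) := ⟨hx⟩
      refine le_trans (le_of_eq (ciSup_const : (⨆ _ : x ∈ s, |e x|) = |e x|)) ?_
      calc |e x| = ‖(|e x|)‖ := by rw [Real.norm_eq_abs, abs_abs]
        _ ≤ M0 := hM0 x hx
        _ ≤ max M0 0 := le_max_left _ _
    · haveI : IsEmpty (x ∈ s) := ⟨hx⟩
      exact le_trans (le_of_eq (Real.iSup_of_isEmpty _)) (le_max_right _ _)
  have hle : ∀ p ∈ s, |e p| ≤ S := by
    intro p hp
    haveI : Nonempty (p ∈ s) := ⟨hp⟩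
    have h1 : |e p| = ⨆ _ : p ∈ s, |e p| := ciSup_const.symm
    rw [hSdef, h1]
    exact le_ciSup hbdd p
  -- second difference lower bound
  have hq := hvH
  have habs : ‖H‖ / 4 * r ^ 2 ≤ |f (L r) + f (L (-r)) - 2 * f (L 0)| := by
    rcases lt_trichotomy (H v v) 0 with hsgn | hsgn | hsgn
    · have hres := sndiff_ge (φ := fun t => -f (L t)) (φ' := fun t => -ψ t) (φ'' := fun t => -Q t)
        (m := ‖H‖ / 4) hδpos (by positivity)
        (fun t ht => (hφd t (hJ t ht).1).neg)
        (fun t ht => (hψd t (hJ t ht).1).neg)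
        (fun t ht => by
          show ‖H‖ / 4 ≤ -Q t
          have h1 := (hJ t ht).2
          have h2 : |H v v| = -(H v v) := abs_of_neg hsgn
          rw [hQ0] at h1
          rw [abs_lt] at h1
          rw [h2] at hq
          have := h1.2
          linarith)
        r hr hrδ
      have hres' : ‖H‖ / 4 * r ^ 2 ≤ -(f (L r) + f (L (-r)) - 2 * f (L 0)) := by
        have : -f (L r) + -f (L (-r)) - 2 * -f (L 0) = -(f (L r) + f (L (-r)) - 2 * f (L 0)) := by
          ring
        rw [← this]
        exact hres
      exact le_trans hres' (neg_le_abs _)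
    · exfalso
      rw [hsgn] at hq
      simp only [abs_zero] at hq
      linarith
    · have hres := sndiff_ge (φ := fun t => f (L t)) (φ' := ψ) (φ'' := Q)
        (m := ‖H‖ / 4) hδpos (by positivity)
        (fun t ht => hφd t (hJ t ht).1)
        (fun t ht => hψd t (hJ t ht).1)
        (fun t ht => by
          show ‖H‖ / 4 ≤ Q t
          have h1 := (hJ t ht).2
          have h2 : |H v v| = H v v := abs_of_pos hsgn
          rw [hQ0] at h1
          rw [abs_lt] at h1
          rw [h2] at hq
          have := h1.1
          linarith)
        r hr hrδ
      exact le_trans hres (le_abs_self _)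
  -- affine part cancels
  have hkey : f (L r) + f (L (-r)) - 2 * f (L 0) = e (L r) + e (L (-r)) - 2 * e (L 0) := by
    rw [hedef, hLdef]
    simp only [inner_add_right, real_inner_smul_right]
    ring
  rw [hkey] at habs
  have h1 := hle (L r) hp1
  have h2 := hle (L (-r)) hp2
  have h0 := hle (L 0) hp0
  have habs2 : |e (L r) + e (L (-r)) - 2 * e (L 0)| ≤ 4 * S := by
    have t1 : |e (L r) + e (L (-r)) - 2 * e (L 0)| ≤ |e (L r)| + |e (L (-r))| + 2 * |e (L 0)| := by
      have := abs_add_le (e (L r)) (e (L (-r)))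
      have := abs_add_le (e (L r) + e (L (-r))) (-(2 * e (L 0)))
      rw [abs_neg, abs_mul] at this
      simp only [abs_two] at this
      calc |e (L r) + e (L (-r)) - 2 * e (L 0)|
          = |e (L r) + e (L (-r)) + -(2 * e (L 0))| := by ring_nf
        _ ≤ |e (L r) + e (L (-r))| + 2 * |e (L 0)| := by
            have h := abs_add_le (e (L r) + e (L (-r))) (-(2 * e (L 0)))
            rw [abs_neg, abs_mul, abs_two] at h
            exact h
        _ ≤ |e (L r)| + |e (L (-r))| + 2 * |e (L 0)| := by
            have := abs_add_le (e (L r)) (e (L (-r)))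
            linarith
    linarith
  nlinarith [habs, habs2, sq_nonneg r]
end
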